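/- arXiv:0804.3399 — 3 statements merged into one kernel-verified Lean document; each statement's English description precedes it below -/
import Mathlib

section
/- Let k > 0 and g(x,y) := e^{ik|x−y|}/(4π|x−y|). There is an absolute constant c > 0 such that for all a > 0 with k·a ≤ 1 and all x, y ∈ ℝ³ with |y| ≤ a and |x| ≥ 2a, setting β := x/|x|, one has | g(x,y) − e^{ik|x|} e^{−ik β·y} / (4π|x|) | ≤ c·( a + k a² ) / |x|². -/
open scoped RealInnerProductSpace

lemma expI_lip (t s : ℝ) :
    ‖Complex.exp (Complex.I * t) - Complex.exp (Complex.I * s)‖ ≤ |t - s| := by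
  have hd : ∀ u : ℝ, HasDerivAt (fun v : ℝ => Complex.exp (Complex.I * v))
      (Complex.exp (Complex.I * u) * Complex.I) u := by
    intro u
    have h1 : HasDerivAt (fun z : ℂ => Complex.exp (Complex.I * z))
        (Complex.exp (Complex.I * u) * Complex.I) (u : ℂ) := by
      have h2 := ((Complex.hasDerivAt_exp (Complex.I * u)).comp (u : ℂ)
          ((hasDerivAt_id (u : ℂ)).const_mul Complex.I))
      simp only [mul_one] at h2
      exact h2
    exact h1.comp_ofReal
  have hlip : LipschitzWith 1 (fun v : ℝ => Complex.exp (Complex.I * v)) := by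
    apply lipschitzWith_of_nnnorm_deriv_le (fun u => (hd u).differentiableAt)
    intro u
    rw [(hd u).deriv, ← NNReal.coe_le_coe]
    simp [Complex.norm_exp]
  simpa [dist_eq_norm, Real.dist_eq] using hlip.dist_le_mul t s

/-- The outgoing Green's function `g(x,y) = e^{ik|x−y|}/(4π|x−y|)` of the Helmholtz
operator `Δ + k²` in `ℝ³`. -/
noncomputable def greenG (k : ℝ) (x y : EuclideanSpace ℝ (Fin 3)) : ℂ :=
  Complex.exp (Complex.I * (k : ℂ) * (‖x - y‖ : ℂ)) / ((4 * Real.pi * ‖x - y‖ : ℝ) : ℂ)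

set_option maxHeartbeats 2000000 in
/-- There is an absolute constant `c > 0` such that for all `k > 0`, `a > 0` with
`k·a ≤ 1`, and all `x, y ∈ ℝ³` with `|y| ≤ a` and `|x| ≥ 2a`, setting `β := x/|x|`,
one has `|g(x,y) − e^{ik|x|} e^{−ik β·y}/(4π|x|)| ≤ c (a + k a²)/|x|²`. -/
theorem stmt4 :
    ∃ c : ℝ, 0 < c ∧
      ∀ (k a : ℝ), 0 < k → 0 < a → k * a ≤ 1 →
        ∀ x y : EuclideanSpace ℝ (Fin 3), ‖y‖ ≤ a → 2 * a ≤ ‖x‖ →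
          ‖greenG k x y -
              Complex.exp (Complex.I * (k : ℂ) * (‖x‖ : ℂ)) *
                Complex.exp (-(Complex.I * (k : ℂ) * ((⟪x, y⟫ / ‖x‖ : ℝ) : ℂ))) /
                ((4 * Real.pi * ‖x‖ : ℝ) : ℂ)‖ ≤
            c * (a + k * a ^ 2) / ‖x‖ ^ 2 := by
  refine ⟨1, one_pos, ?_⟩
  intro k a hk ha hka x y hy hx
  have hpi : (0:ℝ) < Real.pi := Real.pi_pos
  set r : ℝ := ‖x‖ with hr_def
  set ρ : ℝ := ‖x - y‖ with hρ_def
  have hr : 0 < r := lt_of_lt_of_le (by linarith) hx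
  have hry : |r - ρ| ≤ a := by
    have h1 : |r - ρ| ≤ ‖x - (x - y)‖ := abs_norm_sub_norm_le x (x - y)
    simpa using h1.trans (by simpa using hy)
  have hρhalf : r / 2 ≤ ρ := by
    have := abs_le.1 hry
    linarith
  have hρ : 0 < ρ := lt_of_lt_of_le (by linarith) hρhalf
  set p : ℝ := ⟪x, y⟫ / r with hp_def
  have hip : |⟪x, y⟫| ≤ r * a := by
    calc |⟪x, y⟫| ≤ ‖x‖ * ‖y‖ := abs_real_inner_le_norm x y
    _ ≤ r * a := by apply mul_le_mul_of_nonneg_left hy (norm_nonneg x)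
  have hpa : |p| ≤ a := by
    rw [hp_def, abs_div, abs_of_pos hr, div_le_iff₀ hr]
    linarith [hip]
  set q : ℝ := r - p with hq_def
  have hqhalf : r / 2 ≤ q := by
    have := abs_le.1 hpa
    have : p ≤ a := this.2
    have haR : a ≤ r / 2 := by linarith
    simp only [hq_def]; linarith
  have hq : 0 < q := lt_of_lt_of_le (by linarith) hqhalf
  have hsq : ρ ^ 2 - q ^ 2 = ‖y‖ ^ 2 - p ^ 2 := by
    have h1 : ρ ^ 2 = r ^ 2 - 2 * ⟪x, y⟫ + ‖y‖ ^ 2 := by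
      simpa [hρ_def, hr_def] using (@norm_sub_sq_real (EuclideanSpace ℝ (Fin 3)) _ _ x y)
    have h2 : p * r = ⟪x, y⟫ := div_mul_cancel₀ _ hr.ne'
    nlinarith [h1, h2]
  have hdiff : |ρ - q| ≤ a ^ 2 / r := by
    have h1 : |ρ ^ 2 - q ^ 2| ≤ a ^ 2 := by
      rw [hsq]
      have hy2 : ‖y‖ ^ 2 ≤ a ^ 2 := by nlinarith [norm_nonneg y]
      have hp2 : p ^ 2 ≤ a ^ 2 := by nlinarith [abs_le.1 hpa, abs_nonneg p]
      rw [abs_le]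
      constructor <;> nlinarith [sq_nonneg p, sq_nonneg ‖y‖]
    rw [le_div_iff₀ hr]
    calc |ρ - q| * r ≤ |ρ - q| * (ρ + q) :=
          mul_le_mul_of_nonneg_left (by linarith) (abs_nonneg _)
      _ = |ρ ^ 2 - q ^ 2| := by
          rw [← abs_of_pos (show (0:ℝ) < ρ + q by linarith), ← abs_mul]
          ring_nf
      _ ≤ a ^ 2 := h1
  -- rewrite target exponential
  set A : ℂ := Complex.exp (Complex.I * (k * ρ : ℝ)) with hA_def
  set B : ℂ := Complex.exp (Complex.I * (k * q : ℝ)) with hB_def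
  have hgA : greenG k x y = A / ((4 * Real.pi * ρ : ℝ) : ℂ) := by
    rw [greenG, hA_def, ← hρ_def]
    push_cast
    ring_nf
  have hgB : Complex.exp (Complex.I * (k : ℂ) * (‖x‖ : ℂ)) *
      Complex.exp (-(Complex.I * (k : ℂ) * ((⟪x, y⟫ / ‖x‖ : ℝ) : ℂ))) = B := by
    rw [hB_def, ← Complex.exp_add]
    congr 1
    have : ((⟪x, y⟫ / ‖x‖ : ℝ) : ℂ) = (p : ℂ) := by rw [hp_def, hr_def]
    rw [this]
    have hqc : ((k * q : ℝ) : ℂ) = (k : ℂ) * ((r : ℝ) : ℂ) - (k : ℂ) * (p : ℂ) := by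
      push_cast [hq_def]; ring
    rw [hqc]
    ring
  have hid : greenG k x y -
      Complex.exp (Complex.I * (k : ℂ) * (‖x‖ : ℂ)) *
        Complex.exp (-(Complex.I * (k : ℂ) * ((⟪x, y⟫ / ‖x‖ : ℝ) : ℂ))) /
        ((4 * Real.pi * ‖x‖ : ℝ) : ℂ)
      = A * ((((4 * Real.pi * ρ)⁻¹ - (4 * Real.pi * r)⁻¹ : ℝ)) : ℂ)
        + (A - B) * ((((4 * Real.pi * r)⁻¹ : ℝ)) : ℂ) := by
    rw [hgA, hgB, ← hr_def]
    push_cast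
    ring
  rw [hid]
  have hnA : ‖A‖ = 1 := by
    simp [hA_def, Complex.norm_exp]
  clear_value r ρ p q A B
  clear hr_def hρ_def hp_def hgA hgB
  have hAB : ‖A - B‖ ≤ k * (a ^ 2 / r) := by
    calc ‖A - B‖
        = ‖Complex.exp (Complex.I * ((k * ρ : ℝ) : ℂ))
            - Complex.exp (Complex.I * ((k * q : ℝ) : ℂ))‖ := by rw [hA_def, hB_def]
      _ ≤ |k * ρ - k * q| := expI_lip _ _
      _ = k * |ρ - q| := by rw [← mul_sub, abs_mul, abs_of_pos hk]
      _ ≤ k * (a ^ 2 / r) := by exact mul_le_mul_of_nonneg_left hdiff hk.le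
  have hT1 : |(4 * Real.pi * ρ)⁻¹ - (4 * Real.pi * r)⁻¹| ≤ a / r ^ 2 := by
    have hne1 : (4 * Real.pi * ρ) ≠ 0 := by positivity
    have hne2 : (4 * Real.pi * r) ≠ 0 := by positivity
    have heq : (4 * Real.pi * ρ)⁻¹ - (4 * Real.pi * r)⁻¹
        = (r - ρ) / (4 * Real.pi * ρ * r) := by
      field_simp
    have hpos1 : (0:ℝ) < 4 * Real.pi * ρ * r :=
      mul_pos (mul_pos (by linarith) hρ) hr
    have hpos2 : (0:ℝ) < r ^ 2 := pow_pos hr 2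
    rw [heq, abs_div, abs_of_pos hpos1]
    rw [div_le_div_iff₀ hpos1 hpos2]
    calc |r - ρ| * r ^ 2 ≤ a * r ^ 2 :=
          mul_le_mul_of_nonneg_right hry hpos2.le
      _ ≤ a * (4 * Real.pi * ρ * r) := by
          apply mul_le_mul_of_nonneg_left _ ha.le
          have h4 : (1:ℝ) ≤ 2 * Real.pi := by nlinarith [Real.pi_gt_three]
          nlinarith [mul_le_mul_of_nonneg_right hρhalf hr.le, sq_nonneg r,
            mul_pos hr hr]
  have hT2 : |(4 * Real.pi * r)⁻¹| ≤ 1 / r := by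
    have hpos : (0:ℝ) < 4 * Real.pi * r := mul_pos (by linarith) hr
    rw [abs_of_pos (inv_pos.2 hpos), one_div]
    apply inv_anti₀ hr
    nlinarith [Real.pi_gt_three]
  calc ‖A * (((4 * Real.pi * ρ)⁻¹ - (4 * Real.pi * r)⁻¹ : ℝ) : ℂ)
        + (A - B) * (((4 * Real.pi * r)⁻¹ : ℝ) : ℂ)‖
      ≤ ‖A * (((4 * Real.pi * ρ)⁻¹ - (4 * Real.pi * r)⁻¹ : ℝ) : ℂ)‖
        + ‖(A - B) * (((4 * Real.pi * r)⁻¹ : ℝ) : ℂ)‖ := norm_add_le _ _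
    _ = ‖A‖ * |(4 * Real.pi * ρ)⁻¹ - (4 * Real.pi * r)⁻¹|
        + ‖A - B‖ * |(4 * Real.pi * r)⁻¹| := by
        rw [norm_mul, norm_mul, Complex.norm_real, Complex.norm_real,
          Real.norm_eq_abs, Real.norm_eq_abs]
    _ ≤ 1 * (a / r ^ 2) + (k * (a ^ 2 / r)) * (1 / r) := by
        apply add_le_add
        · rw [hnA, one_mul]; linarith [hT1]
        · exact mul_le_mul hAB hT2 (abs_nonneg _) (mul_nonneg hk.le (div_nonneg (sq_nonneg a) hr.le))
    _ ≤ 1 * (a + k * a ^ 2) / r ^ 2 := by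
        have h1 : (k * (a ^ 2 / r)) * (1 / r) = k * a ^ 2 / r ^ 2 := by
          field_simp
        have h2 : 1 * (a + k * a ^ 2) / r ^ 2 = a / r ^ 2 + k * a ^ 2 / r ^ 2 := by
          ring
        rw [h1, h2, one_mul]
end

section
/- Let γ > 0 and let h : [0,1] → ℝ be continuously differentiable with h(t) > 0 for all t ∈ [0,1]. For ν > 0 define I(ν) := ∫_0^1 t³ · (d/dt)[ γ(1−t)² h(t) ] / ( ν + γ(1−t)² h(t) ) dt. Then there exists a constant C > 0 such that | I(ν) − ln ν | ≤ C for all ν ∈ (0,1]. In particular, I(ν) = ln ν + O(1) as ν → 0⁺. -/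
open MeasureTheory intervalIntegral

/-- Let `γ > 0` and `h : [0,1] → ℝ` be continuously differentiable (with derivative `h'`)
and positive.  For `ν > 0`, let
`I(ν) = ∫₀¹ t³ (d/dt)[γ(1−t)² h(t)] / (ν + γ(1−t)² h(t)) dt`
(by the product rule, `(d/dt)[γ(1−t)²h(t)] = γ(−2(1−t)h(t) + (1−t)² h'(t))`).
Then there is `C > 0` with `|I(ν) − ln ν| ≤ C` for all `ν ∈ (0,1]`; in particular
`I(ν) = ln ν + O(1)` as `ν → 0⁺`. -/
theorem stmt8 (γ : ℝ) (hγ : 0 < γ) (h h' : ℝ → ℝ)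
    (hderiv : ∀ t ∈ Set.Icc (0 : ℝ) 1, HasDerivWithinAt h (h' t) (Set.Icc 0 1) t)
    (hcont : ContinuousOn h' (Set.Icc 0 1))
    (hpos : ∀ t ∈ Set.Icc (0 : ℝ) 1, 0 < h t)
    (I : ℝ → ℝ)
    (hI : ∀ ν : ℝ, I ν = ∫ t in (0 : ℝ)..1,
      t ^ 3 * (γ * (-2 * (1 - t) * h t + (1 - t) ^ 2 * h' t)) /
        (ν + γ * (1 - t) ^ 2 * h t)) :
    ∃ C : ℝ, 0 < C ∧ ∀ ν ∈ Set.Ioc (0 : ℝ) 1, |I ν - Real.log ν| ≤ C := by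
  have hne : (Set.Icc (0:ℝ) 1).Nonempty := Set.nonempty_Icc.2 zero_le_one
  have hhC : ContinuousOn h (Set.Icc 0 1) := fun t ht => (hderiv t ht).continuousWithinAt
  obtain ⟨a, ha, hmin⟩ := isCompact_Icc.exists_isMinOn hne hhC
  obtain ⟨b, hb, hmax⟩ := isCompact_Icc.exists_isMaxOn hne hhC
  set m := h a with hm_def
  set M := h b with hM_def
  have hm : 0 < m := hpos a ha
  have hM : 0 < M := hpos b hb
  set g : ℝ → ℝ := fun t => γ * (1 - t) ^ 2 * h t with hg_def
  have hg0 : ∀ t ∈ Set.Icc (0:ℝ) 1, 0 ≤ g t := fun t ht =>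
    mul_nonneg (mul_nonneg hγ.le (sq_nonneg _)) (hpos t ht).le
  have hgM : ∀ t ∈ Set.Icc (0:ℝ) 1, g t ≤ γ * M := by
    intro t ht
    obtain ⟨ht0, ht1⟩ := ht
    have h1 : (1 - t) ^ 2 ≤ 1 := by nlinarith
    have h2 : h t ≤ M := hmax ⟨ht0, ht1⟩
    have h3 : 0 < h t := hpos t ⟨ht0, ht1⟩
    calc g t = γ * (1 - t) ^ 2 * h t := rfl
      _ ≤ γ * 1 * h t := by
          apply mul_le_mul_of_nonneg_right _ h3.le
          exact mul_le_mul_of_nonneg_left h1 hγ.le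
      _ = γ * h t := by ring
      _ ≤ γ * M := mul_le_mul_of_nonneg_left h2 hγ.le
  set K := |Real.log (γ * m)| + |Real.log (1 + γ * M)| with hK_def
  have hK0 : 0 ≤ K := add_nonneg (abs_nonneg _) (abs_nonneg _)
  set B : ℝ → ℝ := fun t => K + 4 * (1 - t) ^ (-(1/2 : ℝ)) with hB_def
  have hBint : IntervalIntegrable B volume 0 1 := by
    apply IntervalIntegrable.add intervalIntegrable_const
    have h1 : IntervalIntegrable (fun x : ℝ => x ^ (-(1/2:ℝ))) volume 0 1 :=
      intervalIntegrable_rpow' (by norm_num)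
    have h2 := (h1.comp_sub_left 1).symm
    simpa using h2.const_mul 4
  set c₀ := ∫ t in (0:ℝ)..1, B t with hc₀_def
  have hc₀ : 0 ≤ c₀ := by
    apply intervalIntegral.integral_nonneg zero_le_one
    intro u hu
    have : (0:ℝ) ≤ (1 - u) ^ (-(1/2:ℝ)) := Real.rpow_nonneg (by linarith [hu.2]) _
    simp only [hB_def]
    linarith
  refine ⟨3 * c₀ + 1, by linarith, fun ν hν => ?_⟩
  obtain ⟨hν0, hν1⟩ := hν
  have hden : ∀ t ∈ Set.Icc (0:ℝ) 1, 0 < ν + g t := fun t ht => by linarith [hg0 t ht]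
  -- continuity facts
  have hgC : ContinuousOn g (Set.Icc 0 1) :=
    ((continuous_const.mul ((continuous_const.sub continuous_id).pow 2)).continuousOn).mul hhC
  have hdenC : ContinuousOn (fun t => ν + g t) (Set.Icc 0 1) := continuousOn_const.add hgC
  have hlogC : ContinuousOn (fun t => Real.log (ν + g t)) (Set.Icc 0 1) :=
    hdenC.log (fun t ht => (hden t ht).ne')
  have hg'C : ContinuousOn (fun t => γ * (-2 * (1 - t) * h t + (1 - t) ^ 2 * h' t))
      (Set.Icc 0 1) := by
    apply continuousOn_const.mul
    apply ContinuousOn.add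
    · exact ((continuous_const.mul (continuous_const.sub continuous_id)).continuousOn).mul hhC
    · exact (((continuous_const.sub continuous_id).pow 2).continuousOn).mul hcont
  set φ : ℝ → ℝ := fun t =>
    t ^ 3 * (γ * (-2 * (1 - t) * h t + (1 - t) ^ 2 * h' t)) / (ν + g t) with hφ_def
  have hφC : ContinuousOn φ (Set.Icc 0 1) :=
    ((continuous_pow 3).continuousOn.mul hg'C).div hdenC (fun t ht => (hden t ht).ne')
  have hφint : IntervalIntegrable φ volume 0 1 := by
    apply ContinuousOn.intervalIntegrable
    rwa [Set.uIcc_of_le zero_le_one]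
  have hψC : ContinuousOn (fun t : ℝ => 3 * t ^ 2 * Real.log (ν + g t)) (Set.Icc 0 1) :=
    ((continuous_const.mul (continuous_pow 2)).continuousOn).mul hlogC
  have hψint : IntervalIntegrable (fun t : ℝ => 3 * t ^ 2 * Real.log (ν + g t)) volume 0 1 := by
    apply ContinuousOn.intervalIntegrable
    rwa [Set.uIcc_of_le zero_le_one]
  -- FTC
  set F : ℝ → ℝ := fun t => t ^ 3 * Real.log (ν + g t) with hF_def
  set F' : ℝ → ℝ := fun t => 3 * t ^ 2 * Real.log (ν + g t) + φ t with hF'_def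
  have hFC : ContinuousOn F (Set.Icc 0 1) := ((continuous_pow 3).continuousOn).mul hlogC
  have hF'int : IntervalIntegrable F' volume 0 1 := hψint.add hφint
  have hFd : ∀ x ∈ Set.Ioo (0:ℝ) 1, HasDerivWithinAt F (F' x) (Set.Ioi x) x := by
    intro x hx
    have hx' : x ∈ Set.Icc (0:ℝ) 1 := ⟨hx.1.le, hx.2.le⟩
    have hmem : Set.Icc (0:ℝ) 1 ∈ nhds x := Icc_mem_nhds hx.1 hx.2
    have hh : HasDerivAt h (h' x) x := (hderiv x hx').hasDerivAt hmem
    have hq : HasDerivAt (fun t : ℝ => γ * (1 - t) ^ 2) (γ * (-2 * (1 - x))) x := by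
      have h1 : HasDerivAt (fun t : ℝ => 1 - t) (-1) x := (hasDerivAt_id x).const_sub 1
      have h2 := (h1.pow 2).const_mul γ
      refine h2.congr_deriv ?_
      push_cast
      ring
    have hgd : HasDerivAt g (γ * (-2 * (1 - x) * h x + (1 - x) ^ 2 * h' x)) x := by
      have h2 := hq.mul hh
      refine h2.congr_deriv ?_
      ring
    have hlog : HasDerivAt (fun t => Real.log (ν + g t))
        ((γ * (-2 * (1 - x) * h x + (1 - x) ^ 2 * h' x)) / (ν + g x)) x := by
      have h2 := ((hasDerivAt_const x ν).add hgd).log (hden x hx').ne'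
      simpa using h2
    have hpow : HasDerivAt (fun t : ℝ => t ^ 3) (3 * x ^ 2) x := by
      simpa using hasDerivAt_pow 3 x
    have h3 := hpow.mul hlog
    have h4 : F' x = 3 * x ^ 2 * Real.log (ν + g x) +
        x ^ 3 * ((γ * (-2 * (1 - x) * h x + (1 - x) ^ 2 * h' x)) / (ν + g x)) := by
      simp only [hF'_def, hφ_def]
      ring
    rw [h4]
    exact h3.hasDerivWithinAt
  have key : ∫ t in (0:ℝ)..1, F' t = Real.log ν := by
    rw [integral_eq_sub_of_hasDeriv_right_of_le zero_le_one hFC hFd hF'int]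
    simp [hF_def, hg_def]
  have hsplit : ∫ t in (0:ℝ)..1, F' t
      = 3 * (∫ t in (0:ℝ)..1, t ^ 2 * Real.log (ν + g t)) + I ν := by
    rw [hI ν]
    have h1 : ∫ t in (0:ℝ)..1, F' t
        = (∫ t in (0:ℝ)..1, 3 * t ^ 2 * Real.log (ν + g t)) + ∫ t in (0:ℝ)..1, φ t :=
      integral_add hψint hφint
    rw [h1]
    congr 1
    · rw [← intervalIntegral.integral_const_mul]
      apply intervalIntegral.integral_congr
      intro t _
      ring
  set J := ∫ t in (0:ℝ)..1, t ^ 2 * Real.log (ν + g t) with hJ_def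
  have hIJ : I ν - Real.log ν = -(3 * J) := by
    rw [← key, hsplit]
    ring
  -- bound |J|
  have habs_int : IntervalIntegrable (fun t => |t ^ 2 * Real.log (ν + g t)|) volume 0 1 := by
    apply IntervalIntegrable.abs
    apply ContinuousOn.intervalIntegrable
    rw [Set.uIcc_of_le zero_le_one]
    exact ((continuous_pow 2).continuousOn).mul hlogC
  have h1 : |J| ≤ ∫ t in (0:ℝ)..1, |t ^ 2 * Real.log (ν + g t)| :=
    intervalIntegral.abs_integral_le_integral_abs zero_le_one
  have hae : (fun t => |t ^ 2 * Real.log (ν + g t)|)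
      ≤ᵐ[volume.restrict (Set.Icc (0:ℝ) 1)] B := by
    have hne1 : ∀ᵐ t ∂(volume : Measure ℝ), t ≠ 1 := by
      rw [MeasureTheory.ae_iff]
      simp only [ne_eq, not_not, Set.setOf_eq_eq_singleton, Real.volume_singleton]
    filter_upwards [ae_restrict_mem measurableSet_Icc, ae_restrict_of_ae hne1] with t ht ht1
    obtain ⟨ht0, ht1'⟩ := ht
    have h1t : 0 < 1 - t := by
      rcases lt_or_eq_of_le ht1' with hlt | heq
      · linarith
      · exact absurd heq ht1
    have hrpow0 : (0:ℝ) ≤ (1 - t) ^ (-(1/2:ℝ)) := Real.rpow_nonneg h1t.le _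
    have e1 : |t ^ 2 * Real.log (ν + g t)| ≤ |Real.log (ν + g t)| := by
      rw [abs_mul]
      have h2 : |t ^ 2| ≤ 1 := by
        rw [abs_of_nonneg (sq_nonneg t)]
        nlinarith
      nlinarith [abs_nonneg (Real.log (ν + g t))]
    have hdenpos : 0 < ν + g t := hden t ⟨ht0, ht1'⟩
    have hub : Real.log (ν + g t) ≤ Real.log (1 + γ * M) := by
      apply Real.log_le_log hdenpos
      have := hgM t ⟨ht0, ht1'⟩
      linarith
    have hlb : Real.log (γ * m) + 2 * Real.log (1 - t) ≤ Real.log (ν + g t) := by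
      have hgl : γ * m * (1 - t) ^ 2 ≤ ν + g t := by
        have hmle : m ≤ h t := hmin ⟨ht0, ht1'⟩
        have : γ * m * (1 - t) ^ 2 ≤ g t := by
          simp only [hg_def]
          nlinarith [mul_nonneg (mul_nonneg hγ.le (sq_nonneg (1 - t))) (sub_nonneg.2 hmle)]
        linarith
      have h2 := Real.log_le_log (by positivity) hgl
      have h3 : Real.log (γ * m * (1 - t) ^ 2)
          = Real.log (γ * m) + 2 * Real.log (1 - t) := by
        rw [Real.log_mul (by positivity) (by positivity), Real.log_pow]
        push_cast
        ring
      linarith [h3 ▸ h2]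
    have hlog1t : -Real.log (1 - t) ≤ 2 * (1 - t) ^ (-(1/2:ℝ)) := by
      have h2 := Real.log_le_rpow_div (x := (1 - t)⁻¹) (by positivity) one_half_pos
      rw [Real.log_inv] at h2
      have heq : ((1 - t)⁻¹) ^ ((1:ℝ)/2) = (1 - t) ^ (-(1/2:ℝ)) := by
        rw [Real.inv_rpow h1t.le, ← Real.rpow_neg h1t.le]
      rw [heq] at h2
      have h3 : (1 - t) ^ (-(1/2:ℝ)) / (1/2) = 2 * (1 - t) ^ (-(1/2:ℝ)) := by ring
      linarith [h3 ▸ h2]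
    have habs : |Real.log (ν + g t)| ≤ K + 4 * (1 - t) ^ (-(1/2:ℝ)) := by
      rw [abs_le]
      constructor
      · have h3 := neg_abs_le (Real.log (γ * m))
        have h4 : (0:ℝ) ≤ |Real.log (1 + γ * M)| := abs_nonneg _
        simp only [hK_def]
        linarith
      · have h5 := le_abs_self (Real.log (1 + γ * M))
        have h6 : (0:ℝ) ≤ |Real.log (γ * m)| := abs_nonneg _
        simp only [hK_def]
        linarith
    calc |t ^ 2 * Real.log (ν + g t)| ≤ |Real.log (ν + g t)| := e1
      _ ≤ K + 4 * (1 - t) ^ (-(1/2:ℝ)) := habs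
      _ = B t := rfl
  have h2 : (∫ t in (0:ℝ)..1, |t ^ 2 * Real.log (ν + g t)|) ≤ c₀ :=
    intervalIntegral.integral_mono_ae_restrict zero_le_one habs_int hBint hae
  rw [hIJ, abs_neg, abs_mul, abs_of_nonneg (by norm_num : (0:ℝ) ≤ 3)]
  have : |J| ≤ c₀ := le_trans h1 h2
  linarith
end

section
/- Let γ > 0, k > 0, κ > 0, and let h : [0,1] → ℝ be continuously differentiable with h(t) > 0 for all t ∈ [0,1]. For a > 0 define I(a) := ∫_0^1 t³ · (d/dt)[ γ(1−t)² h(t) ] / ( 4π k² a^κ + γ(1−t)² h(t) ) dt. Then there is a constant C₀ > 0 with | I(a) − κ ln a | ≤ C₀ for all a ∈ (0,1]; consequently lim_{a→0⁺} a^κ I(a) = 0, and there is no nonzero constant c ∈ ℝ such that I(a) = c·a^{−κ}(1+o(1)) as a → 0⁺. -/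
set_option maxHeartbeats 1000000


open MeasureTheory Filter Topology

/-- `-log y ≤ 2 * y ^ (-(1/2))` for `0 < y`. -/
lemma aux_neg_log_le (y : ℝ) (hy : 0 < y) : -Real.log y ≤ 2 * y ^ (-(1/2) : ℝ) := by
  have hinv : (0:ℝ) < y⁻¹ := by positivity
  have hs : 0 < Real.sqrt y⁻¹ := Real.sqrt_pos.2 hinv
  have h1 : Real.log y⁻¹ = 2 * Real.log (Real.sqrt y⁻¹) := by
    rw [Real.log_sqrt hinv.le]; ring
  have h2 : Real.log (Real.sqrt y⁻¹) ≤ Real.sqrt y⁻¹ - 1 :=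
    Real.log_le_sub_one_of_pos hs
  have h3 : y ^ (-(1/2) : ℝ) = Real.sqrt y⁻¹ := by
    rw [Real.sqrt_inv, Real.sqrt_eq_rpow, Real.rpow_neg hy.le]
  rw [← Real.log_inv, h3]
  linarith

/-- Key integration-by-parts identity. -/
lemma aux_ftc (G G' : ℝ → ℝ) (A : ℝ) (hA : 0 < A)
    (hGd : ∀ t ∈ Set.Icc (0:ℝ) 1, HasDerivWithinAt G (G' t) (Set.Icc 0 1) t)
    (hG'c : ContinuousOn G' (Set.Icc (0:ℝ) 1))
    (hGnn : ∀ t ∈ Set.Icc (0:ℝ) 1, 0 ≤ G t)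
    (hG1 : G 1 = 0) :
    ∫ t in (0:ℝ)..1, t ^ 3 * G' t / (A + G t)
      = Real.log A - ∫ t in (0:ℝ)..1, 3 * t ^ 2 * Real.log (A + G t) := by
  have hGc : ContinuousOn G (Set.Icc (0:ℝ) 1) := fun t ht => (hGd t ht).continuousWithinAt
  have hden : ∀ t ∈ Set.Icc (0:ℝ) 1, 0 < A + G t := fun t ht => by
    have := hGnn t ht; linarith
  have hdenc : ContinuousOn (fun t => A + G t) (Set.Icc (0:ℝ) 1) := continuousOn_const.add hGc
  have hlogc : ContinuousOn (fun t => Real.log (A + G t)) (Set.Icc (0:ℝ) 1) :=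
    hdenc.log fun t ht => (hden t ht).ne'
  have huIcc : Set.uIcc (0:ℝ) 1 = Set.Icc (0:ℝ) 1 := Set.uIcc_of_le zero_le_one
  have hint1 : IntervalIntegrable (fun t => 3 * t ^ 2 * Real.log (A + G t)) volume 0 1 := by
    apply ContinuousOn.intervalIntegrable
    rw [huIcc]
    exact ((continuous_const.mul (continuous_pow 2)).continuousOn).mul hlogc
  have hint2 : IntervalIntegrable (fun t => t ^ 3 * (G' t / (A + G t))) volume 0 1 := by
    apply ContinuousOn.intervalIntegrable
    rw [huIcc]
    exact ((continuous_pow 3).continuousOn).mul (hG'c.div hdenc fun t ht => (hden t ht).ne')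
  have hFTC : ∫ t in (0:ℝ)..1,
      (3 * t ^ 2 * Real.log (A + G t) + t ^ 3 * (G' t / (A + G t))) = Real.log A := by
    have hrw := intervalIntegral.integral_eq_sub_of_hasDeriv_right_of_le zero_le_one
      (f := fun t => t ^ 3 * Real.log (A + G t))
      (f' := fun t => 3 * t ^ 2 * Real.log (A + G t) + t ^ 3 * (G' t / (A + G t)))
      (((continuous_pow 3).continuousOn).mul hlogc)
      ?_ (hint1.add hint2)
    · rw [hrw]; simp [hG1]
    · intro x hx
      have hmem : x ∈ Set.Icc (0:ℝ) 1 := Set.mem_Icc_of_Ioo hx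
      have hnhds : Set.Icc (0:ℝ) 1 ∈ 𝓝 x := Icc_mem_nhds hx.1 hx.2
      have hG : HasDerivAt G (G' x) x := (hGd x hmem).hasDerivAt hnhds
      have hlog : HasDerivAt (fun t => Real.log (A + G t)) ((A + G x)⁻¹ * G' x) x := by
        have hd : HasDerivAt (fun t => A + G t) (G' x) x := by
          exact hG.const_add A
        exact (Real.hasDerivAt_log (hden x hmem).ne').comp x hd
      have hpow : HasDerivAt (fun t : ℝ => t ^ 3) (3 * x ^ 2) x := by
        simpa using hasDerivAt_pow 3 x
      have hmul := hpow.mul hlog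
      have heq : 3 * x ^ 2 * Real.log (A + G x) + x ^ 3 * (G' x / (A + G x))
          = 3 * x ^ 2 * Real.log (A + G x) + x ^ 3 * ((A + G x)⁻¹ * G' x) := by
        rw [div_eq_inv_mul]
      show HasDerivWithinAt (fun t => t ^ 3 * Real.log (A + G t))
        (3 * x ^ 2 * Real.log (A + G x) + x ^ 3 * (G' x / (A + G x))) (Set.Ioi x) x
      rw [heq]
      exact hmul.hasDerivWithinAt
  have hsplit := intervalIntegral.integral_add hint1 hint2
  rw [hsplit] at hFTC
  have : ∫ t in (0:ℝ)..1, t ^ 3 * G' t / (A + G t)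
      = ∫ t in (0:ℝ)..1, t ^ 3 * (G' t / (A + G t)) := by
    simp only [mul_div_assoc]
  rw [this]
  linarith

/-- Let `γ > 0`, `k > 0`, `κ > 0`, and `h : [0,1] → ℝ` continuously differentiable (with
derivative `h'`) and positive.  For `a > 0`, let
`I(a) = ∫₀¹ t³ (d/dt)[γ(1−t)² h(t)] / (4π k² a^κ + γ(1−t)² h(t)) dt`
(by the product rule, `(d/dt)[γ(1−t)²h(t)] = γ(−2(1−t)h(t) + (1−t)² h'(t))`).
Then there is `C₀ > 0` with `|I(a) − κ ln a| ≤ C₀` for all `a ∈ (0,1]`; consequently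
`a^κ I(a) → 0` as `a → 0⁺`, and there is no nonzero constant `c` with
`I(a) = c a^{−κ}(1 + o(1))` as `a → 0⁺`. -/
theorem stmt9 (γ k κ : ℝ) (hγ : 0 < γ) (hk : 0 < k) (hκ : 0 < κ) (h h' : ℝ → ℝ)
    (hderiv : ∀ t ∈ Set.Icc (0 : ℝ) 1, HasDerivWithinAt h (h' t) (Set.Icc 0 1) t)
    (hcont : ContinuousOn h' (Set.Icc 0 1))
    (hpos : ∀ t ∈ Set.Icc (0 : ℝ) 1, 0 < h t)
    (I : ℝ → ℝ)
    (hI : ∀ a : ℝ, I a = ∫ t in (0 : ℝ)..1,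
      t ^ 3 * (γ * (-2 * (1 - t) * h t + (1 - t) ^ 2 * h' t)) /
        (4 * Real.pi * k ^ 2 * a ^ κ + γ * (1 - t) ^ 2 * h t)) :
    (∃ C₀ : ℝ, 0 < C₀ ∧ ∀ a ∈ Set.Ioc (0 : ℝ) 1, |I a - κ * Real.log a| ≤ C₀) ∧
      Tendsto (fun a : ℝ => a ^ κ * I a) (𝓝[>] (0 : ℝ)) (𝓝 0) ∧
      ¬ ∃ c : ℝ, c ≠ 0 ∧
        Tendsto (fun a : ℝ => I a / (c * a ^ (-κ))) (𝓝[>] (0 : ℝ)) (𝓝 1) := by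
  have hc : ContinuousOn h (Set.Icc (0:ℝ) 1) := fun t ht => (hderiv t ht).continuousWithinAt
  obtain ⟨tm, htm, hmin⟩ :=
    isCompact_Icc.exists_isMinOn (Set.nonempty_Icc.2 zero_le_one) hc
  obtain ⟨tM, htM, hmax⟩ :=
    isCompact_Icc.exists_isMaxOn (Set.nonempty_Icc.2 zero_le_one) hc
  set G : ℝ → ℝ := fun t => γ * (1 - t) ^ 2 * h t with hGdef
  set G' : ℝ → ℝ := fun t => γ * (-2 * (1 - t) * h t + (1 - t) ^ 2 * h' t) with hG'def
  have hGd : ∀ t ∈ Set.Icc (0:ℝ) 1, HasDerivWithinAt G (G' t) (Set.Icc 0 1) t := by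
    intro t ht
    have h1 : HasDerivWithinAt (fun s : ℝ => 1 - s) (-1) (Set.Icc 0 1) t :=
      (hasDerivWithinAt_id t _).const_sub 1
    have h4 := (((h1.pow 2).const_mul γ).mul (hderiv t ht))
    have heq : G' t = γ * ((2:ℕ) * (1 - t) ^ (2 - 1) * -1) * h t
        + γ * (1 - t) ^ 2 * h' t := by
      simp only [hG'def]; push_cast; ring
    rw [heq]
    exact h4
  have hGc : ContinuousOn G (Set.Icc (0:ℝ) 1) := fun t ht => (hGd t ht).continuousWithinAt
  have hc1 : ContinuousOn (fun t : ℝ => 1 - t) (Set.Icc (0:ℝ) 1) :=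
    (continuous_const.sub continuous_id).continuousOn
  have hG'c : ContinuousOn G' (Set.Icc (0:ℝ) 1) := by
    apply continuousOn_const.mul
    exact ((continuousOn_const.mul hc1).mul hc).add ((hc1.pow 2).mul hcont)
  have hGnn : ∀ t ∈ Set.Icc (0:ℝ) 1, 0 ≤ G t := fun t ht =>
    mul_nonneg (mul_nonneg hγ.le (sq_nonneg _)) (hpos t ht).le
  have hG1 : G 1 = 0 := by simp [hGdef]
  set K := 4 * Real.pi * k ^ 2 with hKdef
  have hKpos : 0 < K := by have := Real.pi_pos; positivity
  set mγ := γ * h tm with hmdef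
  have hmγ : 0 < mγ := mul_pos hγ (hpos tm htm)
  set Mγ := γ * h tM with hMdef
  have hMγ : 0 < Mγ := mul_pos hγ (hpos tM htM)
  have hGub : ∀ t ∈ Set.Icc (0:ℝ) 1, G t ≤ Mγ := by
    intro t ht
    have h1 : (1 - t) ^ 2 ≤ 1 := by nlinarith [ht.1, ht.2]
    have h2 : h t ≤ h tM := hmax ht
    have h3 : 0 < h t := hpos t ht
    have : G t = γ * (1 - t) ^ 2 * h t := rfl
    rw [this, hMdef]
    nlinarith [mul_nonneg (mul_nonneg hγ.le (sub_nonneg.2 h1)) h3.le,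
      mul_nonneg hγ.le (sub_nonneg.2 h2)]
  have hGlb : ∀ t ∈ Set.Icc (0:ℝ) 1, mγ * (1 - t) ^ 2 ≤ G t := by
    intro t ht
    have h2 : h tm ≤ h t := hmin ht
    have : G t = γ * (1 - t) ^ 2 * h t := rfl
    rw [this, hmdef]
    nlinarith [mul_nonneg (mul_nonneg hγ.le (sub_nonneg.2 h2)) (sq_nonneg (1 - t))]
  set L : ℝ := ∫ t in (0:ℝ)..1, 3 * t ^ 2 * (Real.log mγ + 2 * Real.log (1 - t)) with hLdef
  set U : ℝ := ∫ t in (0:ℝ)..1, 3 * t ^ 2 * Real.log (K + Mγ) with hUdef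
  have hLint : IntervalIntegrable
      (fun t : ℝ => 3 * t ^ 2 * (Real.log mγ + 2 * Real.log (1 - t))) volume 0 1 := by
    have hdom : IntervalIntegrable
        (fun t : ℝ => 3 * |Real.log mγ| + 12 * (1 - t) ^ (-(1/2) : ℝ)) volume 0 1 := by
      apply IntervalIntegrable.add intervalIntegrable_const
      apply IntervalIntegrable.const_mul
      have hbase := (intervalIntegral.intervalIntegrable_rpow' (a := (0:ℝ)) (b := 1)
        (r := -(1/2)) (by norm_num)).comp_sub_left 1
      simpa using hbase.symm
    refine hdom.mono_fun ?_ ?_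
    · apply Measurable.aestronglyMeasurable
      exact (measurable_const.mul (measurable_id.pow_const 2)).mul
        (measurable_const.add (measurable_const.mul
          (Real.measurable_log.comp (measurable_const.sub measurable_id))))
    · filter_upwards [ae_restrict_mem measurableSet_uIoc] with t ht
      rw [Set.uIoc_of_le zero_le_one] at ht
      have ht0 : 0 < t := ht.1
      have ht1 : t ≤ 1 := ht.2
      have htt : t ^ 2 ≤ 1 := by nlinarith
      have hlog2 : 2 * |Real.log (1 - t)| ≤ 4 * (1 - t) ^ (-(1/2) : ℝ) := by
        rcases eq_or_lt_of_le ht1 with he | hlt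
        · rw [he, show (1:ℝ) - 1 = 0 by norm_num, Real.log_zero,
            Real.zero_rpow (by norm_num : (-(1/2):ℝ) ≠ 0)]
          norm_num
        · have hpos1 : 0 < 1 - t := by linarith
          have hle1 : (1:ℝ) - t ≤ 1 := by linarith
          have hln : Real.log (1 - t) ≤ 0 := Real.log_nonpos hpos1.le hle1
          rw [abs_of_nonpos hln]
          have := aux_neg_log_le (1 - t) hpos1
          linarith
      have hrpnn : (0:ℝ) ≤ (1 - t) ^ (-(1/2) : ℝ) := Real.rpow_nonneg (by linarith) _
      have hb : ‖3 * t ^ 2 * (Real.log mγ + 2 * Real.log (1 - t))‖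
          ≤ 3 * |Real.log mγ| + 12 * (1 - t) ^ (-(1/2) : ℝ) := by
        rw [Real.norm_eq_abs, abs_mul]
        have h5 : |3 * t ^ 2| ≤ 3 := by
          rw [abs_of_nonneg (by positivity)]; nlinarith
        have h6 : |Real.log mγ + 2 * Real.log (1 - t)|
            ≤ |Real.log mγ| + 2 * |Real.log (1 - t)| := by
          calc |Real.log mγ + 2 * Real.log (1 - t)|
              ≤ |Real.log mγ| + |2 * Real.log (1 - t)| := abs_add_le _ _
            _ = |Real.log mγ| + 2 * |Real.log (1 - t)| := by rw [abs_mul]; norm_num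
        calc |3 * t ^ 2| * |Real.log mγ + 2 * Real.log (1 - t)|
            ≤ 3 * (|Real.log mγ| + 2 * |Real.log (1 - t)|) := by
              apply mul_le_mul h5 h6 (abs_nonneg _) (by norm_num)
          _ ≤ 3 * |Real.log mγ| + 12 * (1 - t) ^ (-(1/2) : ℝ) := by nlinarith [abs_nonneg (Real.log mγ)]
      calc ‖3 * t ^ 2 * (Real.log mγ + 2 * Real.log (1 - t))‖
          ≤ 3 * |Real.log mγ| + 12 * (1 - t) ^ (-(1/2) : ℝ) := hb
        _ ≤ ‖3 * |Real.log mγ| + 12 * (1 - t) ^ (-(1/2) : ℝ)‖ := le_abs_self _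
  set C₀ := |Real.log K| + |L| + |U| + 1 with hCdef
  have part1 : ∀ a ∈ Set.Ioc (0 : ℝ) 1, |I a - κ * Real.log a| ≤ C₀ := by
    intro a ha
    have hapos : 0 < a := ha.1
    have hrpos : 0 < a ^ κ := Real.rpow_pos_of_pos hapos κ
    have hA : 0 < K * a ^ κ := mul_pos hKpos hrpos
    have hr1 : a ^ κ ≤ 1 := Real.rpow_le_one hapos.le ha.2 hκ.le
    have hAK : K * a ^ κ ≤ K := by nlinarith
    have hrep : I a = Real.log (K * a ^ κ)
        - ∫ t in (0:ℝ)..1, 3 * t ^ 2 * Real.log (K * a ^ κ + G t) := by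
      rw [hI a]
      exact aux_ftc G G' (K * a ^ κ) hA hGd hG'c hGnn hG1
    set Ja : ℝ := ∫ t in (0:ℝ)..1, 3 * t ^ 2 * Real.log (K * a ^ κ + G t) with hJdef
    have hdenpos : ∀ t ∈ Set.Icc (0:ℝ) 1, 0 < K * a ^ κ + G t := fun t ht => by
      have := hGnn t ht; linarith
    have hJint : IntervalIntegrable (fun t => 3 * t ^ 2 * Real.log (K * a ^ κ + G t))
        volume 0 1 := by
      apply ContinuousOn.intervalIntegrable
      rw [Set.uIcc_of_le zero_le_one]
      exact ((continuous_const.mul (continuous_pow 2)).continuousOn).mul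
        ((continuousOn_const.add hGc).log fun t ht => (hdenpos t ht).ne')
    have hUint : IntervalIntegrable (fun t : ℝ => 3 * t ^ 2 * Real.log (K + Mγ)) volume 0 1 :=
      (Continuous.intervalIntegrable (by continuity) _ _)
    have hlower : L ≤ Ja := by
      apply intervalIntegral.integral_mono_ae_restrict zero_le_one hLint hJint
      have h1 : ∀ᵐ t : ℝ ∂volume.restrict (Set.Icc (0:ℝ) 1), t ≠ 1 := by
        apply ae_restrict_of_ae
        rw [ae_iff]
        have : {a : ℝ | ¬a ≠ 1} = {1} := by ext t; simp
        rw [this]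
        exact measure_singleton 1
      filter_upwards [ae_restrict_mem measurableSet_Icc, h1] with t ht ht1
      have htlt : t < 1 := lt_of_le_of_ne ht.2 ht1
      have h2 : 0 < 1 - t := by linarith
      have key : Real.log mγ + 2 * Real.log (1 - t) ≤ Real.log (K * a ^ κ + G t) := by
        have e1 : Real.log mγ + 2 * Real.log (1 - t) = Real.log (mγ * (1 - t) ^ 2) := by
          rw [Real.log_mul hmγ.ne' (by positivity), Real.log_pow]
          push_cast; ring
        rw [e1]
        apply Real.log_le_log (by positivity)
        have := hGlb t ht
        linarith
      exact mul_le_mul_of_nonneg_left key (by positivity)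
    have hupper : Ja ≤ U := by
      apply intervalIntegral.integral_mono_on zero_le_one hJint hUint
      intro t ht
      have h1 : K * a ^ κ + G t ≤ K + Mγ := by
        have := hGub t ht; linarith
      exact mul_le_mul_of_nonneg_left (Real.log_le_log (hdenpos t ht) h1) (by positivity)
    have hlogA : Real.log (K * a ^ κ) = Real.log K + κ * Real.log a := by
      rw [Real.log_mul hKpos.ne' hrpos.ne', Real.log_rpow hapos]
    have hval : I a - κ * Real.log a = Real.log K - Ja := by
      rw [hrep, hlogA]; ring
    rw [hval, hCdef]
    have hJabs : |Ja| ≤ |L| + |U| := by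
      rw [abs_le]
      constructor
      · have := neg_abs_le L
        have := abs_nonneg U
        linarith
      · have := le_abs_self U
        have := abs_nonneg L
        linarith
    have htri : |Real.log K - Ja| ≤ |Real.log K| + |Ja| := abs_sub _ _
    linarith
  have hC₀pos : 0 < C₀ := by
    rw [hCdef]; positivity
  have part2 : Tendsto (fun a : ℝ => a ^ κ * I a) (𝓝[>] (0 : ℝ)) (𝓝 0) := by
    have hT1 : Tendsto (fun a : ℝ => κ * (Real.log a * a ^ κ)) (𝓝[>] (0:ℝ)) (𝓝 (κ * 0)) :=
      (tendsto_log_mul_rpow_nhdsGT_zero hκ).const_mul κ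
    have hrp : Tendsto (fun a : ℝ => a ^ κ) (𝓝[>] (0:ℝ)) (𝓝 0) := by
      have hco : ContinuousAt (fun x : ℝ => x ^ κ) 0 :=
        Real.continuousAt_rpow_const 0 κ (Or.inr hκ.le)
      have htmp : Tendsto (fun x : ℝ => x ^ κ) (𝓝[>] (0:ℝ)) (𝓝 ((0:ℝ) ^ κ)) :=
        hco.tendsto.mono_left nhdsWithin_le_nhds
      simpa [Real.zero_rpow hκ.ne'] using htmp
    have hT2 : Tendsto (fun a : ℝ => a ^ κ * (I a - κ * Real.log a)) (𝓝[>] (0:ℝ)) (𝓝 0) := by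
      refine squeeze_zero_norm' (a := fun a : ℝ => C₀ * a ^ κ) ?_ (by simpa using hrp.const_mul C₀)
      filter_upwards [Ioc_mem_nhdsGT (zero_lt_one)] with a ha
      have h1 := part1 a ha
      have h2 : (0:ℝ) ≤ a ^ κ := (Real.rpow_pos_of_pos ha.1 κ).le
      rw [Real.norm_eq_abs, abs_mul, abs_of_nonneg h2]
      calc a ^ κ * |I a - κ * Real.log a| ≤ a ^ κ * C₀ :=
            mul_le_mul_of_nonneg_left h1 h2
        _ = C₀ * a ^ κ := mul_comm _ _
    have := hT1.add hT2
    rw [mul_zero, add_zero] at this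
    apply this.congr
    intro a; ring
  refine ⟨⟨C₀, hC₀pos, part1⟩, part2, ?_⟩
  rintro ⟨c, hc0, hlim⟩
  have hz : Tendsto (fun a : ℝ => I a / (c * a ^ (-κ))) (𝓝[>] (0:ℝ)) (𝓝 0) := by
    have hdiv := part2.div_const c
    rw [zero_div] at hdiv
    apply Tendsto.congr' ?_ hdiv
    filter_upwards [self_mem_nhdsWithin] with a ha
    have ha0 : (0:ℝ) < a := ha
    have hne : a ^ κ ≠ 0 := (Real.rpow_pos_of_pos ha0 κ).ne'
    rw [Real.rpow_neg ha0.le]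
    field_simp
  have := tendsto_nhds_unique hlim hz
  norm_num at this
end
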